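/- For every j ≥ 1, log N_j ≤ (log 2 / 2^{j−1}) · √(l_j). -/
import Mathlib


open Filter MeasureTheory Topology

namespace EntDim

/-- The left shift `σ` on `A^ℤ`: `(shift x) i = x (i + 1)`. -/
def shift {A : Type*} (x : ℤ → A) : ℤ → A := fun i => x (i + 1)

/-- The shift by an integer `k`: `(shiftZ k x) i = x (i + k)`, i.e. `σ^k`. -/
def shiftZ {A : Type*} (k : ℤ) (x : ℤ → A) : ℤ → A := fun i => x (i + k)

/-- A subshift: a nonempty closed shift-invariant subset of `A^ℤ`. -/
def IsSubshift {A : Type*} [TopologicalSpace A] (X : Set (ℤ → A)) : Prop :=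
  X.Nonempty ∧ IsClosed X ∧ shift '' X = X

/-- `B_n(X)`: the set of words of length `n` occurring in `X`. -/
def wordsOf {A : Type*} (X : Set (ℤ → A)) (n : ℕ) : Set (Fin n → A) :=
  { w | ∃ x ∈ X, ∀ i : Fin n, w i = x ((i : ℕ) : ℤ) }

/-- `X` is minimal: every orbit is dense in `X`. -/
def IsMinimal {A : Type*} [TopologicalSpace A] (X : Set (ℤ → A)) : Prop :=
  ∀ x ∈ X, X ⊆ closure { z | ∃ k : ℤ, z = shiftZ k x }

/-- `μ` is a shift-invariant Borel probability measure carried by `X`. -/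
def IsInvProbOn {A : Type*} [MeasurableSpace A] (μ : Measure (ℤ → A))
    (X : Set (ℤ → A)) : Prop :=
  IsProbabilityMeasure μ ∧ MeasurePreserving shift μ μ ∧ μ X = 1

/-- The cylinder `[u] = {x ∈ X : x_i = u_i for 0 ≤ i < |u|}` of a finite word `u`. -/
def cylW {A : Type*} (X : Set (ℤ → A)) (u : List A) : Set (ℤ → A) :=
  { x | x ∈ X ∧ ∀ i : Fin u.length, x ((i : ℕ) : ℤ) = u.get i }

/-- The `n`-cylinder `P_n(x) = {y ∈ X : y_i = x_i for 0 ≤ i < n}` of a point `x`. -/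
def cylPt {A : Type*} (X : Set (ℤ → A)) (x : ℤ → A) (n : ℕ) : Set (ℤ → A) :=
  { y | y ∈ X ∧ ∀ i : ℕ, i < n → y (i : ℤ) = x (i : ℤ) }

/-- The first return time `R_n(x) = inf {k ≥ 1 : x_{k+i} = x_i for 0 ≤ i < n}`
(with the junk value `0` if no such `k` exists). -/
noncomputable def retTime {A : Type*} (x : ℤ → A) (n : ℕ) : ℕ :=
  sInf { k : ℕ | 1 ≤ k ∧ ∀ i : ℕ, i < n → x ((k : ℤ) + (i : ℕ)) = x ((i : ℕ) : ℤ) }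

/-- The sequence of pairs `(l_j, N_j)`, `j ≥ 1`, with `l_1 = l1`, `N_1 = 2^⌊√l1⌋`,
`l_{j+1} = l_j · N_j` and `N_{j+1} = (⌊√N_j⌋)!`.  (The value at `j = 0` is junk.) -/
def lN (l1 : ℕ) : ℕ → ℕ × ℕ
  | 0 => (0, 0)
  | 1 => (l1, 2 ^ Nat.sqrt l1)
  | j + 2 => ((lN l1 (j + 1)).1 * (lN l1 (j + 1)).2, Nat.factorial (Nat.sqrt (lN l1 (j + 1)).2))

/-- The length `l_j` of the words of `C_j`. -/
def lseq (l1 j : ℕ) : ℕ := (lN l1 j).1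

/-- The cardinality `N_j` of `C_j`. -/
def Nseq (l1 j : ℕ) : ℕ := (lN l1 j).2

/-- `i ∈ P_j = {2} ∪ {m² : 2 ≤ m ≤ ⌊√N⌋}` (1-based position `i`, where `N = N_j`):
the permuted (unstable) positions. -/
def PermutedIdx (N i : ℕ) : Prop :=
  i = 2 ∨ ∃ m : ℕ, 2 ≤ m ∧ m ≤ Nat.sqrt N ∧ i = m ^ 2

/-- The data of the Construction: a positive integer `l1` and ordered lists
`C j` (`j ≥ 1`) of distinct binary words (`C 0` is irrelevant), where `C 1` consists of
`N_1 = 2^⌊√l1⌋` words of length `l1`, `C j` consists of `N_j` words of length `l_j`, and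
`C (j+1)` is the set of all concatenations of the words of `C j` reordered by a
permutation preserving `P_j` and fixing every position outside `P_j`. -/
structure Construction where
  l1 : ℕ
  hl1 : 0 < l1
  C : ℕ → List (List Bool)
  nodup : ∀ j, 1 ≤ j → (C j).Nodup
  length_eq : ∀ j, 1 ≤ j → (C j).length = Nseq l1 j
  wordLength : ∀ j, 1 ≤ j → ∀ w ∈ C j, w.length = lseq l1 j
  mem_succ : ∀ j, 1 ≤ j → ∀ w : List Bool,
    w ∈ C (j + 1) ↔
      ∃ τ : Equiv.Perm (Fin (C j).length),
        (∀ i : Fin (C j).length, ¬ PermutedIdx (Nseq l1 j) ((i : ℕ) + 1) → τ i = i) ∧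
        (∀ i : Fin (C j).length, PermutedIdx (Nseq l1 j) ((i : ℕ) + 1) →
            PermutedIdx (Nseq l1 j) ((τ i : ℕ) + 1)) ∧
        w = (List.ofFn fun i : Fin (C j).length => (C j).get (τ i)).flatten

/-- The subshift `X` of the Construction: all `x ∈ {0,1}^ℤ` each of whose finite
subwords occurs as a subword of some word in some `C j`. -/
def Construction.space (c : Construction) : Set (ℤ → Bool) :=
  { x | ∀ (a : ℤ) (n : ℕ), ∃ j, 1 ≤ j ∧ ∃ w ∈ c.C j,
      (List.ofFn fun i : Fin n => x (a + (i : ℕ))) <:+: w }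

/-- The offset `t_j(x) ∈ {0, …, l_j − 1}` of the decomposition of `x` into `C j`-words
(defined as an infimum; it is unique in the Marker variant). -/
noncomputable def Construction.tOffset (c : Construction) (j : ℕ) (x : ℤ → Bool) : ℕ :=
  sInf { t : ℕ | t < lseq c.l1 j ∧ ∀ m : ℤ,
    (List.ofFn fun i : Fin (lseq c.l1 j) =>
      x (m * (lseq c.l1 j : ℤ) - (t : ℤ) + (i : ℕ))) ∈ c.C j }

/-- The Marker variant: every word of `C 1` begins with `001`, and `00` occurs in each
word of `C 1` only as its prefix. -/
structure MarkerConstruction extends Construction where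
  marker_prefix : ∀ w ∈ C 1, [false, false, true] <+: w
  marker_unique : ∀ w ∈ C 1, ∀ n : ℕ, [false, false] <+: w.drop n → n = 0


lemma lseq_succ (l1 j : ℕ) (hj : 1 ≤ j) :
    lseq l1 (j + 1) = lseq l1 j * Nseq l1 j := by
  obtain ⟨k, rfl⟩ := Nat.exists_eq_add_of_le hj
  simp [lseq, Nseq, lN, Nat.add_comm 1 k]

lemma Nseq_succ (l1 j : ℕ) (hj : 1 ≤ j) :
    Nseq l1 (j + 1) = Nat.factorial (Nat.sqrt (Nseq l1 j)) := by
  obtain ⟨k, rfl⟩ := Nat.exists_eq_add_of_le hj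
  simp [Nseq, lN, Nat.add_comm 1 k]

lemma Nseq_pos (l1 j : ℕ) (hj : 1 ≤ j) : 0 < Nseq l1 j := by
  induction j with
  | zero => omega
  | succ n ih =>
    rcases Nat.eq_or_lt_of_le hj with h | h
    · have hn0 : n = 0 := by omega
      subst hn0
      simp only [Nseq, lN]
      positivity
    · rw [Nseq_succ l1 n (by omega)]
      exact Nat.factorial_pos _

lemma lseq_pos (l1 : ℕ) (hl1 : 0 < l1) (j : ℕ) (hj : 1 ≤ j) : 0 < lseq l1 j := by
  induction j with
  | zero => omega
  | succ n ih =>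
    rcases Nat.eq_or_lt_of_le hj with h | h
    · simpa [lseq, lN, ← h] using hl1
    · rw [lseq_succ l1 n (by omega)]
      exact Nat.mul_pos (ih (by omega)) (Nseq_pos l1 n (by omega))

/-- For every `j ≥ 1`, `log N_j ≤ (log 2 / 2^(j−1)) · √(l_j)`. -/
theorem statement6 (l1 : ℕ) (hl1 : 0 < l1) (j : ℕ) (hj : 1 ≤ j) :
    Real.log (Nseq l1 j) ≤ Real.log 2 / 2 ^ (j - 1) * Real.sqrt (lseq l1 j) := by
  induction j, hj using Nat.le_induction with
  | base =>
    have h1 : Nseq l1 1 = 2 ^ Nat.sqrt l1 := by simp [Nseq, lN]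
    have h2 : lseq l1 1 = l1 := by simp [lseq, lN]
    rw [h1, h2]
    norm_num [Real.log_pow]
    have hsq : ((Nat.sqrt l1 : ℝ)) ^ 2 ≤ (l1 : ℝ) := by
      rw [← Nat.cast_pow]
      exact_mod_cast (by nlinarith [Nat.sqrt_le' l1] : Nat.sqrt l1 ^ 2 ≤ l1)
    have hk : (Nat.sqrt l1 : ℝ) ≤ Real.sqrt l1 :=
      calc (Nat.sqrt l1 : ℝ) = Real.sqrt ((Nat.sqrt l1 : ℝ) ^ 2) :=
            (Real.sqrt_sq (Nat.cast_nonneg _)).symm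
        _ ≤ Real.sqrt l1 := Real.sqrt_le_sqrt hsq
    calc (Nat.sqrt l1 : ℝ) * Real.log 2
        ≤ Real.sqrt l1 * Real.log 2 :=
          mul_le_mul_of_nonneg_right hk (Real.log_nonneg one_le_two)
      _ = Real.log 2 * Real.sqrt l1 := mul_comm _ _
  | succ n hn ih =>
    set N := Nseq l1 n with hN
    set l := lseq l1 n with hl
    set s := Nat.sqrt N with hs
    have hNpos : 0 < N := Nseq_pos l1 n hn
    have hlpos : 0 < l := lseq_pos l1 hl1 n hn
    have hspos : 0 < s := Nat.sqrt_pos.mpr hNpos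
    have hs2N : (s : ℝ) ^ 2 ≤ (N : ℝ) := by
      rw [← Nat.cast_pow]
      exact_mod_cast (by nlinarith [Nat.sqrt_le' N] : s ^ 2 ≤ N)
    have hsleR : (s : ℝ) ≤ Real.sqrt N :=
      (Real.sqrt_sq (Nat.cast_nonneg _)).symm ▸ Real.sqrt_le_sqrt hs2N
    have hlogN0 : 0 ≤ Real.log N :=
      Real.log_nonneg (by exact_mod_cast hNpos)
    have hlogs : Real.log s ≤ Real.log N / 2 := by
      have : Real.log ((s : ℝ) ^ 2) ≤ Real.log N :=
        Real.log_le_log (by positivity) hs2N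
      rw [Real.log_pow] at this
      push_cast at this
      linarith
    have hfact : Real.log (Nseq l1 (n + 1)) ≤ (s : ℝ) * Real.log s := by
      rw [Nseq_succ l1 n hn]
      calc Real.log (Nat.factorial s)
          ≤ Real.log ((s : ℝ) ^ s) := by
            apply Real.log_le_log (by exact_mod_cast Nat.factorial_pos s)
            exact_mod_cast Nat.factorial_le_pow s
        _ = (s : ℝ) * Real.log s := by rw [Real.log_pow]
    have hlogs0 : 0 ≤ Real.log s :=
      Real.log_nonneg (by exact_mod_cast hspos)
    have key : (s : ℝ) * Real.log s ≤ Real.sqrt N * (Real.log N / 2) :=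
      mul_le_mul hsleR hlogs hlogs0 (Real.sqrt_nonneg _)
    have hIH : Real.log N / 2 ≤ Real.log 2 / 2 ^ n * Real.sqrt l := by
      have h2 : Real.log 2 / 2 ^ (n - 1) * Real.sqrt l / 2
          = Real.log 2 / 2 ^ n * Real.sqrt l := by
        obtain ⟨k, rfl⟩ := Nat.exists_eq_add_of_le hn
        rw [Nat.add_sub_cancel_left, pow_add]
        ring
      linarith [ih]
    have hsplit : Real.sqrt (lseq l1 (n + 1)) = Real.sqrt l * Real.sqrt N := by
      rw [lseq_succ l1 n hn]
      push_cast
      exact Real.sqrt_mul (Nat.cast_nonneg _) _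
    have : Real.log (Nseq l1 (n + 1))
        ≤ Real.sqrt N * (Real.log 2 / 2 ^ n * Real.sqrt l) := by
      calc Real.log (Nseq l1 (n + 1)) ≤ (s : ℝ) * Real.log s := hfact
        _ ≤ Real.sqrt N * (Real.log N / 2) := key
        _ ≤ Real.sqrt N * (Real.log 2 / 2 ^ n * Real.sqrt l) := by
            exact mul_le_mul_of_nonneg_left hIH (Real.sqrt_nonneg _)
    rw [Nat.add_sub_cancel, hsplit]
    linarith [this, le_of_eq (by ring :
      Real.sqrt N * (Real.log 2 / 2 ^ n * Real.sqrt l)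
        = Real.log 2 / 2 ^ n * (Real.sqrt l * Real.sqrt N))]

end EntDim
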